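/- The boundariness of an n-outcome observable C = (C₁,…,C_n) on a finite-dimensional Hilbert space equals λ_min, the minimal eigenvalue among all the effects C₁,…,C_n: b(C) = min_{j} λ_min(C_j). -/

import Mathlib

open Matrix
open scoped ComplexOrder

/-- The weight function `t_y(x) = sup{ t ∈ [0,1) : (y - t·x)/(1-t) ∈ Z }`. -/
noncomputable def weight {V : Type*} [AddCommGroup V] [Module ℝ V] (Z : Set V) (y x : V) : ℝ :=
  sSup {t : ℝ | 0 ≤ t ∧ t < 1 ∧ (1 - t)⁻¹ • (y - t • x) ∈ Z}

/-- The boundariness `b(y) = inf_{x ∈ Z} t_y(x)`. -/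
noncomputable def bdness {V : Type*} [AddCommGroup V] [Module ℝ V] (Z : Set V) (y : V) : ℝ :=
  sInf (weight Z y '' Z)

/-- The convex set of `n`-outcome POVMs on a `d`-dimensional system. -/
def POVMs (d n : ℕ) : Set (Fin n → Matrix (Fin d) (Fin d) ℂ) :=
  {A | (∀ j, (A j).PosSemidef) ∧ ∑ j, A j = 1}

private lemma smul_psd {d : ℕ} {M : Matrix (Fin d) (Fin d) ℂ} (hM : M.PosSemidef)
    {c : ℝ} (hc : 0 ≤ c) : (c • M).PosSemidef := by
  refine posSemidef_iff_dotProduct_mulVec.mpr ⟨?_, ?_⟩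
  · show (c • M)ᴴ = c • M
    rw [conjTranspose_smul, star_trivial, hM.1]
  · intro x
    rw [smul_mulVec, dotProduct_smul, Complex.real_smul]
    exact mul_nonneg (Complex.zero_le_real.mpr hc) (hM.dotProduct_mulVec_nonneg x)

private lemma sub_smul_one_psd {d : ℕ} {M : Matrix (Fin d) (Fin d) ℂ} (hM : M.IsHermitian)
    {t : ℝ} (ht : ∀ i, t ≤ hM.eigenvalues i) : (M - t • 1).PosSemidef := by
  classical
  have key : M - t • (1 : Matrix (Fin d) (Fin d) ℂ) =
      (hM.eigenvectorUnitary : Matrix (Fin d) (Fin d) ℂ) *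
        diagonal ((RCLike.ofReal : ℝ → ℂ) ∘ (fun i => hM.eigenvalues i - t)) *
        ((hM.eigenvectorUnitary : Matrix (Fin d) (Fin d) ℂ))ᴴ := by
    have hU : (hM.eigenvectorUnitary : Matrix (Fin d) (Fin d) ℂ) *
        ((hM.eigenvectorUnitary : Matrix (Fin d) (Fin d) ℂ))ᴴ = 1 := by
      rw [← star_eq_conjTranspose]
      exact (Matrix.mem_unitaryGroup_iff).mp hM.eigenvectorUnitary.2
    have hdiag : diagonal ((RCLike.ofReal : ℝ → ℂ) ∘ (fun i => hM.eigenvalues i - t)) =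
        diagonal ((RCLike.ofReal : ℝ → ℂ) ∘ hM.eigenvalues) -
          (t : ℂ) • (1 : Matrix (Fin d) (Fin d) ℂ) := by
      rw [smul_one_eq_diagonal, diagonal_sub]
      ext i j
      by_cases h : i = j
      · subst h
        simp only [Matrix.diagonal_apply_eq, Function.comp_apply]
        push_cast
        rfl
      · rw [Matrix.diagonal_apply_ne _ h, Matrix.diagonal_apply_ne _ h]
    have hone : t • (1 : Matrix (Fin d) (Fin d) ℂ) = (t : ℂ) • 1 := by
      ext i j
      simp [Matrix.smul_apply, Complex.real_smul]
    rw [hdiag, Matrix.mul_sub, Matrix.sub_mul, Matrix.mul_smul, Matrix.smul_mul, mul_one, hU,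
      hone]
    congr 1
    conv_lhs => rw [hM.spectral_theorem]
    rw [Unitary.conjStarAlgAut_apply, star_eq_conjTranspose]
  rw [key]
  apply PosSemidef.mul_mul_conjTranspose_same
  rw [posSemidef_diagonal_iff]
  intro i
  simp only [Function.comp_apply]
  exact RCLike.ofReal_nonneg.mpr (by linarith [ht i])

private lemma one_sub_psd {d n : ℕ} {A : Fin n → Matrix (Fin d) (Fin d) ℂ}
    (h1 : ∀ j, (A j).PosSemidef) (h2 : ∑ j, A j = 1) (j : Fin n) :
    ((1 : Matrix (Fin d) (Fin d) ℂ) - A j).PosSemidef := by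
  classical
  have hs : ∑ i ∈ Finset.univ.erase j, A i + A j = 1 := by
    rw [Finset.sum_erase_add _ _ (Finset.mem_univ j)]; exact h2
  have h : (1 : Matrix (Fin d) (Fin d) ℂ) - A j = ∑ i ∈ Finset.univ.erase j, A i :=
    (eq_sub_of_add_eq hs).symm
  rw [h]
  exact Finset.sum_induction A (fun M => M.PosSemidef) (fun a b ha hb => ha.add hb)
    Matrix.PosSemidef.zero (fun i _ => h1 i)

theorem bdness_povm_eq_min_eigenvalue {d n : ℕ} [NeZero d] [NeZero n]
    (C : Fin n → Matrix (Fin d) (Fin d) ℂ)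
    (hpos : ∀ j, (C j).PosSemidef) (hsum : ∑ j, C j = 1) :
    bdness (POVMs d n) C = ⨅ j, ⨅ i, (hpos j).isHermitian.eigenvalues i := by
  classical
  set Z := POVMs d n with hZ
  set e : Fin n → Fin d → ℝ := fun j i => (hpos j).isHermitian.eigenvalues i with he
  set lam : ℝ := ⨅ j, ⨅ i, e j i with hlamdef
  have hCZ : C ∈ Z := ⟨hpos, hsum⟩
  -- lam is a lower bound for all eigenvalues
  have hlam_le : ∀ j i, lam ≤ e j i := by
    intro j i
    refine le_trans (ciInf_le (Set.Finite.bddBelow (Set.finite_range _)) j) ?_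
    exact ciInf_le (Set.Finite.bddBelow (Set.finite_range _)) i
  -- lam is attained
  obtain ⟨j₀, hj₀⟩ := exists_eq_ciInf_of_finite (f := fun j => ⨅ i, e j i)
  obtain ⟨i₀, hi₀⟩ := exists_eq_ciInf_of_finite (f := fun i => e j₀ i)
  have hatt : e j₀ i₀ = lam := by rw [hi₀, hlamdef, ← hj₀]
  have hlam0 : 0 ≤ lam := hatt ▸ (hpos j₀).eigenvalues_nonneg i₀
  -- eigenvector for the minimal eigenvalue
  set ψ : Fin d → ℂ := ⇑((hpos j₀).isHermitian.eigenvectorBasis i₀) with hψdef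
  have hψ1 : star ψ ⬝ᵥ ψ = 1 := by
    have h := (hpos j₀).isHermitian.eigenvectorBasis.orthonormal.1 i₀
    have h2 : (inner ℂ ((hpos j₀).isHermitian.eigenvectorBasis i₀)
        ((hpos j₀).isHermitian.eigenvectorBasis i₀) : ℂ) = 1 := by
      rw [inner_self_eq_norm_sq_to_K, h]; norm_num
    rw [EuclideanSpace.inner_eq_star_dotProduct, dotProduct_comm] at h2
    exact h2
  have hmulψ : C j₀ *ᵥ ψ = lam • ψ := by
    rw [hψdef, (hpos j₀).isHermitian.mulVec_eigenvectorBasis i₀]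
    rw [show (hpos j₀).isHermitian.eigenvalues i₀ = lam from hatt]
  -- lam ≤ 1
  have hlam1 : lam ≤ 1 := by
    have hps := one_sub_psd hpos hsum j₀
    have h := hps.dotProduct_mulVec_nonneg ψ
    rw [sub_mulVec, one_mulVec, dotProduct_sub, hψ1, hmulψ, dotProduct_smul,
      Complex.real_smul, hψ1, mul_one] at h
    have : (lam : ℂ) ≤ 1 := by
      rw [← sub_nonneg]; exact h
    exact_mod_cast this
  -- 0 is in every weight set
  have hmem0 : ∀ A ∈ Z, (0 : ℝ) ∈
      {t : ℝ | 0 ≤ t ∧ t < 1 ∧ (1 - t)⁻¹ • (C - t • A) ∈ Z} := by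
    intro A _
    refine ⟨le_refl _, zero_lt_one, ?_⟩
    simpa using hCZ
  have hbddS : ∀ A : Fin n → Matrix (Fin d) (Fin d) ℂ,
      BddAbove {t : ℝ | 0 ≤ t ∧ t < 1 ∧ (1 - t)⁻¹ • (C - t • A) ∈ Z} :=
    fun A => ⟨1, fun s hs => hs.2.1.le⟩
  -- Lower bound: lam ≤ weight Z C A for every A ∈ Z
  have hlower : ∀ A ∈ Z, lam ≤ weight Z C A := by
    intro A hA
    -- every t ∈ [0, 1) with t < lam is in the weight set
    have hmem : ∀ t : ℝ, 0 ≤ t → t < 1 → t < lam →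
        t ∈ {t : ℝ | 0 ≤ t ∧ t < 1 ∧ (1 - t)⁻¹ • (C - t • A) ∈ Z} := by
      intro t ht0 ht1 htlam
      refine ⟨ht0, ht1, ?_, ?_⟩
      · intro j
        have hj : ((1 - t)⁻¹ • (C - t • A)) j = (1 - t)⁻¹ • (C j - t • A j) := rfl
        rw [hj]
        apply smul_psd _ (inv_nonneg.mpr (by linarith))
        have hdecomp : C j - t • A j = (C j - t • 1) + t • (1 - A j) := by
          rw [smul_sub]; abel
        rw [hdecomp]
        exact (sub_smul_one_psd (hpos j).isHermitian
          (fun i => le_of_lt (lt_of_lt_of_le htlam (hlam_le j i)))).add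
          (smul_psd (one_sub_psd hA.1 hA.2 j) ht0)
      · have hsA : ∑ j, ((1 - t)⁻¹ • (C - t • A)) j = (1 - t)⁻¹ • ∑ j, (C j - t • A j) := by
          rw [Finset.smul_sum]; rfl
        rw [hsA, Finset.sum_sub_distrib, hsum, ← Finset.smul_sum, hA.2]
        rw [show (1 : Matrix (Fin d) (Fin d) ℂ) - t • 1 = (1 - t) • 1 by
          rw [sub_smul, one_smul]]
        rw [smul_smul, inv_mul_cancel₀ (by linarith), one_smul]
    -- now conclude lam ≤ sSup of the weight set
    by_contra hcon
    push_neg at hcon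
    have hw0 : 0 ≤ weight Z C A := le_csSup (hbddS A) (hmem0 A hA)
    set t : ℝ := (weight Z C A + min lam 1) / 2 with htdef
    have hwlt : weight Z C A < min lam 1 := lt_min hcon (lt_of_lt_of_le hcon hlam1)
    have ht1 : t < 1 := by
      have := min_le_right lam 1
      simp only [htdef]
      nlinarith [lt_of_lt_of_le hwlt (min_le_right lam 1)]
    have htlam : t < lam := by
      have := min_le_left lam 1
      simp only [htdef]
      nlinarith [lt_of_lt_of_le hwlt (min_le_left lam 1)]
    have ht0 : 0 ≤ t := by
      simp only [htdef]
      nlinarith [le_min hlam0 zero_le_one]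
    have : t ≤ weight Z C A := le_csSup (hbddS A) (hmem t ht0 ht1 htlam)
    simp only [htdef] at this
    nlinarith
  -- boundedness below of the image
  have hbddim : BddBelow (weight Z C '' Z) := by
    refine ⟨0, ?_⟩
    rintro w ⟨A, hA, rfl⟩
    exact le_csSup (hbddS A) (hmem0 A hA)
  -- Upper bound: there is A₀ ∈ Z with weight Z C A₀ ≤ lam
  have hupper : ∃ A₀ ∈ Z, weight Z C A₀ ≤ lam := by
    rcases eq_or_lt_of_le (Nat.one_le_iff_ne_zero.mpr (NeZero.ne n)) with h1 | h1
    · -- n = 1 : every eigenvalue is 1, and weight ≤ 1 always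
      have hC0 : C j₀ = 1 := by
        rw [← hsum]
        symm
        have : Subsingleton (Fin n) := by
          constructor; intro a b; omega
        exact Fintype.sum_subsingleton _ j₀
      have hlam_eq : lam = 1 := by
        have h := hmulψ
        rw [hC0, one_mulVec] at h
        have h2 : star ψ ⬝ᵥ ψ = star ψ ⬝ᵥ (lam • ψ) := by rw [← h]
        rw [hψ1, dotProduct_smul, Complex.real_smul, hψ1, mul_one] at h2
        exact_mod_cast h2.symm
      refine ⟨C, hCZ, ?_⟩
      rw [hlam_eq]
      exact csSup_le ⟨0, hmem0 C hCZ⟩ (fun t ht => ht.2.1.le)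
    · -- n ≥ 2 : use the rank-one projection onto the minimal eigenvector
      obtain ⟨k, hk⟩ : ∃ k : Fin n, k ≠ j₀ := by
        rcases Fintype.exists_ne_of_one_lt_card (by simpa using h1) j₀ with ⟨k, hk⟩
        exact ⟨k, hk⟩
      set P : Matrix (Fin d) (Fin d) ℂ := vecMulVec ψ (star ψ) with hPdef
      have hψ1' : ∑ l, star (ψ l) * ψ l = 1 := by
        have := hψ1
        simpa [dotProduct] using this
      have hPherm : Pᴴ = P := by
        ext i j
        simp only [hPdef, conjTranspose_apply, vecMulVec_apply, Pi.star_apply, star_mul',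
          star_star]
        ring
      have hPP : P * P = P := by
        ext i j
        simp only [hPdef, mul_apply, vecMulVec_apply, Pi.star_apply]
        calc ∑ l, ψ i * star (ψ l) * (ψ l * star (ψ j))
            = (∑ l, star (ψ l) * ψ l) * (ψ i * star (ψ j)) := by
              rw [Finset.sum_mul]; congr 1; ext l; ring
          _ = ψ i * star (ψ j) := by rw [hψ1', one_mul]
      have hPpsd : P.PosSemidef := by
        have h := posSemidef_conjTranspose_mul_self P
        rwa [hPherm, hPP] at h
      have hQpsd : ((1 : Matrix (Fin d) (Fin d) ℂ) - P).PosSemidef := by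
        have h := posSemidef_conjTranspose_mul_self ((1 : Matrix (Fin d) (Fin d) ℂ) - P)
        have h1' : ((1 : Matrix (Fin d) (Fin d) ℂ) - P)ᴴ = 1 - P := by
          rw [conjTranspose_sub, conjTranspose_one, hPherm]
        have h2' : ((1 : Matrix (Fin d) (Fin d) ℂ) - P) * (1 - P) = 1 - P := by
          have hh : ((1 : Matrix (Fin d) (Fin d) ℂ) - P) * (1 - P) = 1 - P - P + P * P := by
            noncomm_ring
          rw [hh, hPP]
          abel
        rwa [h1', h2'] at h
      set A₀ : Fin n → Matrix (Fin d) (Fin d) ℂ :=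
        fun i => (if i = j₀ then P else 0) + (if i = k then 1 - P else 0) with hA₀def
      have hA₀Z : A₀ ∈ Z := by
        constructor
        · intro j
          apply Matrix.PosSemidef.add
          · split_ifs
            · exact hPpsd
            · exact Matrix.PosSemidef.zero
          · split_ifs
            · exact hQpsd
            · exact Matrix.PosSemidef.zero
        · rw [hA₀def, Finset.sum_add_distrib, Fintype.sum_ite_eq' j₀ (fun _ => P),
            Fintype.sum_ite_eq' k (fun _ => (1 : Matrix (Fin d) (Fin d) ℂ) - P)]
          abel
      have hA₀j₀ : A₀ j₀ = P := by
        simp [hA₀def, hk.symm]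
      have hPψ : P *ᵥ ψ = ψ := by
        ext i
        simp only [hPdef, mulVec, dotProduct, vecMulVec_apply, Pi.star_apply]
        calc ∑ l, ψ i * star (ψ l) * ψ l
            = (∑ l, star (ψ l) * ψ l) * ψ i := by rw [Finset.sum_mul]; congr 1; ext l; ring
          _ = ψ i := by rw [hψ1', one_mul]
      refine ⟨A₀, hA₀Z, ?_⟩
      apply csSup_le ⟨0, hmem0 A₀ hA₀Z⟩
      intro t ht
      obtain ⟨ht0, ht1, htZ⟩ := ht
      by_contra hcon
      push_neg at hcon
      -- the j₀ component of the rescaled observable is not psd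
      have hpsd := htZ.1 j₀
      have hj : ((1 - t)⁻¹ • (C - t • A₀)) j₀ = (1 - t)⁻¹ • (C j₀ - t • A₀ j₀) := rfl
      rw [hj, hA₀j₀] at hpsd
      have hpair := hpsd.dotProduct_mulVec_nonneg ψ
      rw [smul_mulVec, dotProduct_smul, Complex.real_smul, sub_mulVec,
        smul_mulVec, hPψ, hmulψ, dotProduct_sub, dotProduct_smul, dotProduct_smul,
        Complex.real_smul, Complex.real_smul, hψ1, mul_one, mul_one] at hpair
      have hval : ((((1 - t)⁻¹ : ℝ) : ℂ)) * ((lam : ℂ) - (t : ℂ)) =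
          (((1 - t)⁻¹ * (lam - t) : ℝ) : ℂ) := by push_cast; ring
      rw [hval] at hpair
      have hreal : 0 ≤ (1 - t)⁻¹ * (lam - t) := Complex.zero_le_real.mp hpair
      have hinv : 0 < (1 - t)⁻¹ := inv_pos.mpr (by linarith)
      nlinarith
  -- conclude
  obtain ⟨A₀, hA₀, hwA₀⟩ := hupper
  apply le_antisymm
  · exact le_trans (csInf_le hbddim ⟨A₀, hA₀, rfl⟩) hwA₀
  · exact le_csInf ⟨weight Z C C, ⟨C, hCZ, rfl⟩⟩ (by rintro w ⟨A, hA, rfl⟩; exact hlower A hA)
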